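/- Let n ≥ 1 and let θ₀, ..., θₙ be positive reals with θ := (θ₀⋯θₙ)^{1/(n+1)} ≤ 1. Suppose for some index m with 1 ≤ m ≤ n and some real k ≥ 1 we have θᵢ ≤ k for all 0 ≤ i ≤ m−1 and θᵢ ≥ k⁻¹ for all m ≤ i ≤ n. Then Θ := max over 1 ≤ r ≤ n of (θ₀⋯θ_{r−1})/θʳ satisfies Θ ≤ k^{n−1} · max{ θ₀/(θ₀⋯θₙ), 1/θₙ }. -/

import Mathlib

/-- bound on Θ := max_{1≤r≤n} (θ₀⋯θ_{r−1})/θʳ under the split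
smallness/largeness conditions on the θᵢ. -/
theorem stmt_0 (n : ℕ) (hn : 1 ≤ n) (θ : ℕ → ℝ) (hpos : ∀ i ≤ n, 0 < θ i)
    (hθ : (∏ i ∈ Finset.range (n + 1), θ i) ^ ((1 : ℝ) / (n + 1)) ≤ 1)
    (m : ℕ) (hm1 : 1 ≤ m) (hm2 : m ≤ n) (k : ℝ) (hk : 1 ≤ k)
    (hsmall : ∀ i < m, θ i ≤ k)
    (hbig : ∀ i, m ≤ i → i ≤ n → k⁻¹ ≤ θ i) :
    ∀ r, 1 ≤ r → r ≤ n →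
      (∏ i ∈ Finset.range r, θ i) /
          ((∏ i ∈ Finset.range (n + 1), θ i) ^ ((1 : ℝ) / (n + 1))) ^ r ≤
        k ^ (n - 1) *
          max (θ 0 / ∏ i ∈ Finset.range (n + 1), θ i) (1 / θ n) := by
  intro r hr1 hr2
  set P := ∏ i ∈ Finset.range (n + 1), θ i with hPdef
  have hP : 0 < P :=
    Finset.prod_pos fun i hi => hpos i (Nat.lt_succ_iff.mp (Finset.mem_range.mp hi))
  set A := P ^ ((1 : ℝ) / (n + 1)) with hAdef
  have hA : 0 < A := Real.rpow_pos_of_pos hP _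
  have hA1 : A ≤ 1 := hθ
  have hApow : A ^ (n + 1) = P := by
    rw [hAdef, ← Real.rpow_natCast (P ^ ((1 : ℝ) / (n + 1))) (n + 1),
      ← Real.rpow_mul hP.le]
    rw [one_div, Nat.cast_add, Nat.cast_one,
      inv_mul_cancel₀ (by positivity : ((n : ℝ) + 1) ≠ 0), Real.rpow_one]
  have hk0 : 0 < k := lt_of_lt_of_le one_pos hk
  have hθ0 : 0 < θ 0 := hpos 0 (by omega)
  have hθn : 0 < θ n := hpos n le_rfl
  rcases le_or_gt r m with hcase | hcase
  · -- r ≤ m : use small bounds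
    obtain ⟨s, rfl⟩ : ∃ s, r = s + 1 := ⟨r - 1, by omega⟩
    have hXpos : 0 < ∏ i ∈ Finset.range (s + 1), θ i :=
      Finset.prod_pos fun i hi => hpos i (by have := Finset.mem_range.mp hi; omega)
    have hprod : ∏ i ∈ Finset.range (s + 1), θ i ≤ θ 0 * k ^ s := by
      rw [Finset.prod_range_succ', mul_comm]
      have h : ∏ i ∈ Finset.range s, θ (i + 1) ≤ k ^ s := by
        calc ∏ i ∈ Finset.range s, θ (i + 1)
            ≤ ∏ _i ∈ Finset.range s, k :=
              Finset.prod_le_prod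
                (fun i hi => (hpos _ (by have := Finset.mem_range.mp hi; omega)).le)
                (fun i hi => hsmall _ (by have := Finset.mem_range.mp hi; omega))
          _ = k ^ s := by rw [Finset.prod_const, Finset.card_range]
      exact mul_le_mul_of_nonneg_left h hθ0.le
    have h1 : A ^ (n + 1) ≤ A ^ (s + 1) :=
      pow_le_pow_of_le_one hA.le hA1 (by omega)
    calc (∏ i ∈ Finset.range (s + 1), θ i) / A ^ (s + 1)
        ≤ (∏ i ∈ Finset.range (s + 1), θ i) / A ^ (n + 1) := by
          apply div_le_div_of_nonneg_left hXpos.le (pow_pos hA _) h1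
      _ = (∏ i ∈ Finset.range (s + 1), θ i) / P := by rw [hApow]
      _ ≤ (θ 0 * k ^ s) / P := by gcongr
      _ ≤ (θ 0 * k ^ (n - 1)) / P := by
          gcongr <;> first | exact hk | omega
      _ = k ^ (n - 1) * (θ 0 / P) := by ring
      _ ≤ k ^ (n - 1) * max (θ 0 / P) (1 / θ n) := by
          exact mul_le_mul_of_nonneg_left (le_max_left _ _) (by positivity)
  · -- m < r : use big bounds
    have hXpos : 0 < ∏ i ∈ Finset.range r, θ i :=
      Finset.prod_pos fun i hi => hpos i (by have := Finset.mem_range.mp hi; omega)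
    have hQpos : 0 < ∏ i ∈ Finset.Ico r (n + 1), θ i :=
      Finset.prod_pos fun i hi => hpos i (by have := Finset.mem_Ico.mp hi; omega)
    have hsplit : (∏ i ∈ Finset.range r, θ i) * ∏ i ∈ Finset.Ico r (n + 1), θ i = P := by
      rw [hPdef, Finset.prod_range_mul_prod_Ico _ (by omega : r ≤ n + 1)]
    have hAn : A ^ n = P / A := by
      field_simp
      rw [← hApow]; ring
    have hQlb : (k⁻¹) ^ (n - r) * θ n ≤ ∏ i ∈ Finset.Ico r (n + 1), θ i := by
      rw [Finset.prod_Ico_succ_top (by omega : r ≤ n)]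
      apply mul_le_mul_of_nonneg_right _ hθn.le
      calc (k⁻¹) ^ (n - r) = ∏ _i ∈ Finset.Ico r n, k⁻¹ := by
            rw [Finset.prod_const, Nat.card_Ico]
        _ ≤ ∏ i ∈ Finset.Ico r n, θ i :=
            Finset.prod_le_prod (fun i _ => by positivity)
              (fun i hi => hbig i (by have := Finset.mem_Ico.mp hi; omega)
                (by have := Finset.mem_Ico.mp hi; omega))
    have hDpos : 0 < (k⁻¹) ^ (n - r) * θ n := by positivity
    have h1 : A ^ n ≤ A ^ r := pow_le_pow_of_le_one hA.le hA1 hr2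
    calc (∏ i ∈ Finset.range r, θ i) / A ^ r
        ≤ (∏ i ∈ Finset.range r, θ i) / A ^ n :=
          div_le_div_of_nonneg_left hXpos.le (pow_pos hA _) h1
      _ = (∏ i ∈ Finset.range r, θ i) * A / P := by
          rw [hAn, div_div_eq_mul_div]
      _ = A / ∏ i ∈ Finset.Ico r (n + 1), θ i := by
          rw [← hsplit]
          field_simp
      _ ≤ 1 / ((k⁻¹) ^ (n - r) * θ n) :=
          div_le_div₀ zero_le_one hA1 hDpos hQlb
      _ = k ^ (n - r) / θ n := by
          rw [inv_pow, one_div, mul_inv, inv_inv, div_eq_mul_inv]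
      _ ≤ k ^ (n - 1) / θ n := by
          gcongr <;> first | exact hk | omega
      _ = k ^ (n - 1) * (1 / θ n) := by ring
      _ ≤ k ^ (n - 1) * max (θ 0 / P) (1 / θ n) :=
          mul_le_mul_of_nonneg_left (le_max_right _ _) (by positivity)
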